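/- For any Mirror-P-EXTRA trajectory (x^k, q^k, D^k), the successive differences are monotonically non-increasing in the M-seminorm: for all k ≥ 0, ‖z^{k+1} − z^{k+2}‖_M² ≤ ‖z^k − z^{k+1}‖_M², where z^k = (q^k, D^k). -/

import Mathlib

open Matrix

noncomputable section

/-- Squared Frobenius norm. -/
def frobSq {m p : ℕ} (A : Matrix (Fin m) (Fin p) ℝ) : ℝ := ∑ i, ∑ j, (A i j) ^ 2

/-- Squared `P`-weighted seminorm `⟨A, P A⟩ = tr(Aᵀ P A)`. -/
def wSq {m p : ℕ} (P : Matrix (Fin m) (Fin m) ℝ) (A : Matrix (Fin m) (Fin p) ℝ) : ℝ :=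
  Matrix.trace (Aᵀ * P * A)

/-- `d` is a subgradient of `h` at `x`. -/
def IsSubgradAt {p : ℕ} (h : (Fin p → ℝ) → ℝ) (d x : Fin p → ℝ) : Prop :=
  ∀ y, h x + d ⬝ᵥ (y - x) ≤ h y

/-- The squared `M`-seminorm of a pair `z = (q, D)`. -/
def Msq {n p : ℕ} (c : ℝ) (P : Matrix (Fin n) (Fin n) ℝ)
    (q : Matrix (Fin (n - 1)) (Fin p) ℝ) (D : Matrix (Fin n) (Fin p) ℝ) : ℝ :=
  c * frobSq q + wSq P D

/-! ### Auxiliary lemmas -/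

lemma aux_frobSq_eq_trace {m p : ℕ} (A : Matrix (Fin m) (Fin p) ℝ) :
    frobSq A = Matrix.trace (Aᵀ * A) := by
  simp only [frobSq, Matrix.trace, Matrix.mul_apply, Matrix.diag_apply, transpose_apply, sq]
  rw [Finset.sum_comm]

lemma aux_quad_nonneg {m p : ℕ} (P : Matrix (Fin m) (Fin m) ℝ) (hP : P.PosSemidef)
    (A : Matrix (Fin m) (Fin p) ℝ) : 0 ≤ Matrix.trace (Aᵀ * P * A) := by
  have hT : Aᵀ = Aᴴ := by ext i j; simp [conjTranspose]
  have h1 : (Aᴴ * P * A).PosSemidef := hP.conjTranspose_mul_mul_same A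
  rw [hT]
  exact Finset.sum_nonneg fun j _ => h1.diag_nonneg

lemma aux_tr_symmP {m p : ℕ} (P : Matrix (Fin m) (Fin m) ℝ) (hP : Pᵀ = P)
    (A B : Matrix (Fin m) (Fin p) ℝ) :
    Matrix.trace (Aᵀ * P * B) = Matrix.trace (Bᵀ * P * A) := by
  rw [← Matrix.trace_transpose (Aᵀ * P * B)]
  simp [Matrix.transpose_mul, hP, Matrix.mul_assoc]

lemma aux_tr_symm {m p : ℕ} (A B : Matrix (Fin m) (Fin p) ℝ) :
    Matrix.trace (Aᵀ * B) = Matrix.trace (Bᵀ * A) := by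
  rw [← Matrix.trace_transpose (Aᵀ * B)]
  simp

lemma aux_frob_nonneg {m p : ℕ} (A : Matrix (Fin m) (Fin p) ℝ) :
    0 ≤ Matrix.trace (Aᵀ * A) := by
  rw [← aux_frobSq_eq_trace]
  exact Finset.sum_nonneg fun i _ => Finset.sum_nonneg fun j _ => sq_nonneg _

lemma aux_tr_rows {m p : ℕ} (A B : Matrix (Fin m) (Fin p) ℝ) :
    Matrix.trace (Aᵀ * B) = ∑ i, A i ⬝ᵥ B i := by
  simp only [Matrix.trace, Matrix.mul_apply, Matrix.diag_apply, dotProduct, transpose_apply]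
  rw [Finset.sum_comm]

set_option maxHeartbeats 1000000 in
/-- Monotonicity of the successive differences of Mirror-P-EXTRA (Lemma 4). -/
theorem stmt_6 (n p : ℕ) (hn : 2 ≤ n) (hp : 1 ≤ p)
    (U : Matrix (Fin (n - 1)) (Fin n) ℝ)
    (hU : ∀ v : Fin n → ℝ, U.mulVec v = 0 ↔ ∃ a : ℝ, v = fun _ => a)
    (r : Matrix (Fin n) (Fin p) ℝ)
    (h : Fin n → (Fin p → ℝ) → ℝ)
    (hconv : ∀ i, ConvexOn ℝ Set.univ (h i))
    (c : ℝ) (hc : 0 < c)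
    (β : Fin n → ℝ) (hβ : ∀ i, 0 < β i)
    (hPSD : (Matrix.diagonal β - c • (Uᵀ * U)).PosSemidef)
    -- Mirror-P-EXTRA trajectory
    (x D : ℕ → Matrix (Fin n) (Fin p) ℝ)
    (q : ℕ → Matrix (Fin (n - 1)) (Fin p) ℝ)
    (hsub : ∀ k i, IsSubgradAt (h i) (D k i) (x k i))
    (hrec1 : ∀ k : ℕ,
      x (k + 1) - r + c • (Uᵀ * q (k + 1))
        + (Matrix.diagonal β - c • (Uᵀ * U)) * (D (k + 1) - D k) = 0)
    (hrec2 : ∀ k : ℕ, q (k + 1) = q k + U * D (k + 1)) :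
    ∀ k : ℕ,
      Msq c (Matrix.diagonal β - c • (Uᵀ * U)) (q (k + 1) - q (k + 2)) (D (k + 1) - D (k + 2)) ≤
        Msq c (Matrix.diagonal β - c • (Uᵀ * U)) (q k - q (k + 1)) (D k - D (k + 1)) := by
  intro k
  set P : Matrix (Fin n) (Fin n) ℝ := Matrix.diagonal β - c • (Uᵀ * U) with hPdef
  have Psym : Pᵀ = P := by
    simp [hPdef, transpose_sub, Matrix.transpose_smul, Matrix.transpose_mul,
      Matrix.diagonal_transpose]
  set Dv : Matrix (Fin n) (Fin p) ℝ := D (k+1) - D (k+2) with hDv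
  set Du : Matrix (Fin n) (Fin p) ℝ := D k - D (k+1) with hDu
  set qv : Matrix (Fin (n-1)) (Fin p) ℝ := q (k+1) - q (k+2) with hqv
  set qu : Matrix (Fin (n-1)) (Fin p) ℝ := q k - q (k+1) with hqu
  -- Step A: monotonicity of subgradients
  have hmono : 0 ≤ Matrix.trace (Dvᵀ * (x (k+1) - x (k+2))) := by
    rw [aux_tr_rows]
    refine Finset.sum_nonneg fun i _ => ?_
    have h1 := hsub (k+1) i (x (k+2) i)
    have h2 := hsub (k+2) i (x (k+1) i)
    have key : D (k+1) i ⬝ᵥ (x (k+2) i - x (k+1) i)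
        + D (k+2) i ⬝ᵥ (x (k+1) i - x (k+2) i) ≤ 0 := by linarith
    have expand : Dv i ⬝ᵥ (x (k+1) - x (k+2)) i
        = -(D (k+1) i ⬝ᵥ (x (k+2) i - x (k+1) i)
          + D (k+2) i ⬝ᵥ (x (k+1) i - x (k+2) i)) := by
      simp only [hDv, Matrix.sub_apply, dotProduct, Pi.sub_apply]
      rw [← Finset.sum_add_distrib, ← Finset.sum_neg_distrib]
      exact Finset.sum_congr rfl fun j _ => by ring
    rw [expand]
    linarith
  -- Step B: difference of the first recursion
  have hx : x (k+1) - x (k+2) = -(c • (Uᵀ * qv) + P * (Dv - Du)) := by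
    have e1 := hrec1 k
    have e2 := hrec1 (k+1)
    have e3 : (x (k+1) - r + c • (Uᵀ * q (k+1)) + P * (D (k+1) - D k))
        - (x (k+2) - r + c • (Uᵀ * q (k+2)) + P * (D (k+2) - D (k+1))) = 0 := by
      rw [e1, e2]; simp
    simp only [hqv, hDv, hDu, Matrix.mul_sub, smul_sub] at e3 ⊢
    rw [← sub_eq_zero, ← e3]
    abel
  -- Step C: difference of the second recursion
  have hq : U * Dv = qv - qu := by
    have e1 : U * D (k+1) = q (k+1) - q k := by rw [hrec2 k]; abel
    have e2 : U * D (k+2) = q (k+2) - q (k+1) := by rw [hrec2 (k+1)]; abel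
    rw [hDv, Matrix.mul_sub, e1, e2, hqv, hqu]; abel
  -- Step D: the key inequality in trace form
  have key : Matrix.trace (Dvᵀ * (x (k+1) - x (k+2)))
      = -(c * (Matrix.trace (qvᵀ * qv) - Matrix.trace (quᵀ * qv))
        + (Matrix.trace (Dvᵀ * P * Dv) - Matrix.trace (Dvᵀ * P * Du))) := by
    rw [hx]
    have t1 : Dvᵀ * (Uᵀ * qv) = (U * Dv)ᵀ * qv := by
      rw [Matrix.transpose_mul, Matrix.mul_assoc]
    calc Matrix.trace (Dvᵀ * -(c • (Uᵀ * qv) + P * (Dv - Du)))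
        = -(c * Matrix.trace (Dvᵀ * (Uᵀ * qv))
            + (Matrix.trace (Dvᵀ * P * Dv) - Matrix.trace (Dvᵀ * P * Du))) := by
          simp [Matrix.mul_add, Matrix.mul_sub, Matrix.mul_smul, Matrix.trace_add,
            Matrix.trace_sub, Matrix.trace_smul, Matrix.mul_assoc, smul_eq_mul]
      _ = -(c * (Matrix.trace (qvᵀ * qv) - Matrix.trace (quᵀ * qv))
            + (Matrix.trace (Dvᵀ * P * Dv) - Matrix.trace (Dvᵀ * P * Du))) := by
          rw [t1, hq]
          simp [Matrix.transpose_sub, Matrix.sub_mul, Matrix.trace_sub]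
  -- abbreviations for the six scalars
  set a1 : ℝ := Matrix.trace (qvᵀ * qv)
  set a2 : ℝ := Matrix.trace (quᵀ * qv)
  set a3 : ℝ := Matrix.trace (quᵀ * qu)
  set b1 : ℝ := Matrix.trace (Dvᵀ * P * Dv)
  set b2 : ℝ := Matrix.trace (Dvᵀ * P * Du)
  set b3 : ℝ := Matrix.trace (Duᵀ * P * Du)
  have f1 : 0 ≤ -(c * (a1 - a2) + (b1 - b2)) := by rw [key] at hmono; exact hmono
  have f2 : 0 ≤ a3 - 2 * a2 + a1 := by
    have h0 : 0 ≤ Matrix.trace ((qu - qv)ᵀ * (qu - qv)) := aux_frob_nonneg _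
    have hsm : Matrix.trace (qvᵀ * qu) = a2 := aux_tr_symm qv qu
    simp only [Matrix.transpose_sub, Matrix.sub_mul, Matrix.mul_sub, Matrix.trace_sub] at h0
    rw [hsm] at h0
    linarith
  have f3 : 0 ≤ b3 - 2 * b2 + b1 := by
    have h0 : 0 ≤ Matrix.trace ((Du - Dv)ᵀ * P * (Du - Dv)) := aux_quad_nonneg P hPSD _
    have hsm : Matrix.trace (Duᵀ * P * Dv) = b2 := aux_tr_symmP P Psym Du Dv
    simp only [Matrix.transpose_sub, Matrix.sub_mul, Matrix.mul_sub, Matrix.trace_sub] at h0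
    rw [hsm] at h0
    linarith
  -- assemble
  have hcf2 : 0 ≤ c * (a3 - 2 * a2 + a1) := mul_nonneg hc.le f2
  simp only [Msq, aux_frobSq_eq_trace, wSq]
  nlinarith [hcf2, f3, f1]
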